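/- Let E be a real normed vector space, L ∈ E, c a fixed positive integer, and x : ℕ → E a sequence with ‖x t − L‖ → 0 as t → ∞. Let m : ℕ → E satisfy, for every integer t ≥ c + 1, m t = ((t+1−c)/(t+1)) • m (t−1) + (c/(t+1)) • x t, with arbitrary initial value m c. Then ‖m t − L‖ → 0 as t → ∞. -/

import Mathlib

/-- Common analytic core of the memory convergence proofs: for a fixed positive
integer `c`, if the incoming signal `x t` converges to `L` in norm, then the
memory sequence `m` defined for `t ≥ c + 1` by
`m t = ((t+1−c)/(t+1)) • m (t−1) + (c/(t+1)) • x t` converges to `L` in norm. -/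
theorem sliding_memory_convergence
    {E : Type*} [NormedAddCommGroup E] [NormedSpace ℝ E]
    (L : E) (c : ℕ) (hc : 0 < c) (x m : ℕ → E)
    (hx : Filter.Tendsto (fun t : ℕ => ‖x t - L‖) Filter.atTop (nhds 0))
    (hm : ∀ t : ℕ, c + 1 ≤ t →
      m t = ((((t : ℝ) + 1 - (c : ℝ)) / ((t : ℝ) + 1)) • m (t - 1)
        + (((c : ℝ)) / ((t : ℝ) + 1)) • x t)) :
    Filter.Tendsto (fun t : ℕ => ‖m t - L‖) Filter.atTop (nhds 0) := by
  rw [Metric.tendsto_atTop] at hx ⊢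
  intro ε hε
  obtain ⟨N₀, hN₀⟩ := hx (ε / 2) (by linarith)
  set N := max N₀ (c + 1) with hNdef
  set K := ‖m N - L‖ with hKdef
  have hK0 : 0 ≤ K := norm_nonneg _
  have hc1 : (1 : ℝ) ≤ (c : ℝ) := by exact_mod_cast hc
  have key : ∀ t, N ≤ t → ‖m t - L‖ ≤ ε / 2 + ((N : ℝ) + 1) / ((t : ℝ) + 1) * K := by
    intro t ht
    induction t with
    | zero =>
        have : N = 0 := Nat.le_zero.mp ht
        omega
    | succ t ih =>
        rcases eq_or_lt_of_le ht with h | h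
        · rw [← h]
          have : ((N : ℝ) + 1) / ((N : ℝ) + 1) = 1 := by
            apply div_self; positivity
          rw [this]
          have hx0 : 0 ≤ ε / 2 := by linarith
          linarith [norm_nonneg (m N - L)]
        · have ht' : N ≤ t := by omega
          have ihb := ih ht'
          have hct : c + 1 ≤ t + 1 := by
            have : c + 1 ≤ N := le_max_right _ _
            omega
          have hrec := hm (t + 1) hct
          simp only [Nat.add_sub_cancel] at hrec
          push_cast at hrec
          set a : ℝ := (((t : ℝ) + 1 + 1 - (c : ℝ)) / ((t : ℝ) + 1 + 1)) with hadef
          set b : ℝ := ((c : ℝ) / ((t : ℝ) + 1 + 1)) with hbdef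
          have hden : (0 : ℝ) < (t : ℝ) + 1 + 1 := by positivity
          have hcN : (c : ℝ) ≤ (t : ℝ) + 1 := by
            have : c ≤ t + 1 := by omega
            exact_mod_cast this
          have ha : 0 ≤ a := by
            apply div_nonneg _ hden.le; linarith
          have hb : 0 ≤ b := by positivity
          have hab : a + b = 1 := by
            rw [hadef, hbdef, ← add_div, div_eq_one_iff_eq hden.ne']
            ring
          have hsplit : m (t + 1) - L = a • (m t - L) + b • (x (t + 1) - L) := by
            have h1 : m (t + 1) - L = a • m t + b • x (t + 1) - (a + b) • L := by
              rw [hab, one_smul, hrec]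
            rw [h1, add_smul, smul_sub, smul_sub]
            abel
          have hnorm : ‖m (t + 1) - L‖ ≤ a * ‖m t - L‖ + b * ‖x (t + 1) - L‖ := by
            rw [hsplit]
            refine (norm_add_le _ _).trans ?_
            rw [norm_smul, norm_smul, Real.norm_of_nonneg ha, Real.norm_of_nonneg hb]
          have hxt : ‖x (t + 1) - L‖ ≤ ε / 2 := by
            have : N₀ ≤ t + 1 := by
              have : N₀ ≤ N := le_max_left _ _
              omega
            have := hN₀ (t + 1) this
            rw [Real.dist_eq, sub_zero, abs_of_nonneg (norm_nonneg _)] at this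
            linarith
          have step1 : ‖m (t + 1) - L‖ ≤
              a * (ε / 2 + ((N : ℝ) + 1) / ((t : ℝ) + 1) * K) + b * (ε / 2) := by
            refine hnorm.trans ?_
            have := mul_le_mul_of_nonneg_left ihb ha
            have := mul_le_mul_of_nonneg_left hxt hb
            nlinarith
          have step2 : a * (((N : ℝ) + 1) / ((t : ℝ) + 1)) ≤ ((N : ℝ) + 1) / ((t : ℝ) + 1 + 1) := by
            rw [hadef, div_mul_div_comm, div_le_div_iff₀ (by positivity) (by positivity)]
            have hNn : (0 : ℝ) ≤ (N : ℝ) + 1 := by positivity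
            have h5 : (t : ℝ) + 1 + 1 - (c : ℝ) ≤ (t : ℝ) + 1 := by linarith
            nlinarith [mul_le_mul_of_nonneg_right
              (mul_le_mul_of_nonneg_right h5 hNn) hden.le]
          have step3 : a * (((N : ℝ) + 1) / ((t : ℝ) + 1) * K)
              ≤ ((N : ℝ) + 1) / ((t : ℝ) + 1 + 1) * K := by
            rw [← mul_assoc]
            exact mul_le_mul_of_nonneg_right step2 hK0
          have hcast : ((t + 1 : ℕ) : ℝ) = (t : ℝ) + 1 := by push_cast; ring
          rw [hcast]
          nlinarith
  -- pick T large enough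
  obtain ⟨T, hT⟩ := exists_nat_gt (2 * (((N : ℝ) + 1) * K) / ε)
  refine ⟨max N T, fun t ht => ?_⟩
  have htN : N ≤ t := le_trans (le_max_left _ _) ht
  have htT : T ≤ t := le_trans (le_max_right _ _) ht
  have hkey := key t htN
  have htail : ((N : ℝ) + 1) / ((t : ℝ) + 1) * K < ε / 2 := by
    rw [div_mul_eq_mul_div, div_lt_iff₀ (by positivity)]
    have hTt : (T : ℝ) ≤ (t : ℝ) := by exact_mod_cast htT
    have h2 : 2 * (((N : ℝ) + 1) * K) / ε < (t : ℝ) + 1 := by linarith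
    rw [div_lt_iff₀ hε] at h2
    nlinarith
  rw [Real.dist_eq, sub_zero, abs_of_nonneg (norm_nonneg _)]
  linarith
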